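/- Let u_max > 0 > u_min and v_min > 0 be reals, and let p_s, v_s, p_e, v_e be reals with v_s ≥ v_min and v_e ≥ v_min. Define q_1 = p_s + (v_min^2 − v_s^2)/(2·u_min) and q_2 = p_e + (v_min^2 − v_e^2)/(2·u_max), and suppose q_2 ≥ q_1. Let D = (v_min − v_s)/u_min + (q_2 − q_1)/v_min + (v_e − v_min)/u_max. Then for all reals t_s < t_e and all functions p, v : ℝ → ℝ such that p is differentiable on [t_s, t_e] with p'(t) = v(t) there, v is differentiable on [t_s, t_e] with u_min ≤ v'(t) ≤ u_max for all t there, v(t) ≥ v_min for all t in [t_s, t_e], p(t_s) = p_s, v(t_s) = v_s, p(t_e) = p_e and v(t_e) = v_e, one has t_e − t_s ≤ D. -/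

import Mathlib

open Set

private lemma mono_aux (f : ℝ → ℝ) (a b : ℝ)
    (hf : ∀ t ∈ Set.Icc a b, DifferentiableAt ℝ f t)
    (hf' : ∀ t ∈ Set.Icc a b, 0 ≤ deriv f t) : MonotoneOn f (Set.Icc a b) := by
  apply monotoneOn_of_deriv_nonneg (convex_Icc a b)
  · exact fun t ht => (hf t ht).continuousAt.continuousWithinAt
  · intro t ht
    rw [interior_Icc] at ht
    exact (hf t (Ioo_subset_Icc_self ht)).differentiableWithinAt
  · intro t ht
    rw [interior_Icc] at ht
    exact hf' t (Ioo_subset_Icc_self ht)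

set_option maxHeartbeats 1000000 in
/-- Deadline problem (Problem 3, Proposition 4): D is an upper bound on the travel
time of every admissible trajectory (with speed bounded below by v_min) through
the zone with the given boundary states. -/
theorem stmt_12
    (u_max u_min v_min : ℝ) (hmax : 0 < u_max) (hmin : u_min < 0) (hvmin : 0 < v_min)
    (p_s v_s p_e v_e : ℝ) (hvs : v_min ≤ v_s) (hve : v_min ≤ v_e)
    (q₁ q₂ D : ℝ)
    (hq1 : q₁ = p_s + (v_min ^ 2 - v_s ^ 2) / (2 * u_min))
    (hq2 : q₂ = p_e + (v_min ^ 2 - v_e ^ 2) / (2 * u_max))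
    (hq : q₁ ≤ q₂)
    (hD : D = (v_min - v_s) / u_min + (q₂ - q₁) / v_min + (v_e - v_min) / u_max) :
    ∀ (t_s t_e : ℝ), t_s < t_e →
      ∀ (p v : ℝ → ℝ),
        (∀ t ∈ Set.Icc t_s t_e, HasDerivAt p (v t) t) →
        (∀ t ∈ Set.Icc t_s t_e, DifferentiableAt ℝ v t) →
        (∀ t ∈ Set.Icc t_s t_e, u_min ≤ deriv v t ∧ deriv v t ≤ u_max) →
        (∀ t ∈ Set.Icc t_s t_e, v_min ≤ v t) →
        p t_s = p_s → v t_s = v_s → p t_e = p_e → v t_e = v_e →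
        t_e - t_s ≤ D := by
  intro t_s t_e hts p v hp hv hv' hvlb hps hvse hpe hvee
  set t1 : ℝ := (v_min - v_s) / u_min with ht1def
  set t3 : ℝ := (v_e - v_min) / u_max with ht3def
  have ht1 : 0 ≤ t1 := div_nonneg_of_nonpos (by linarith) hmin.le
  have ht3 : 0 ≤ t3 := div_nonneg (by linarith) hmax.le
  have hqv : 0 ≤ (q₂ - q₁) / v_min := div_nonneg (by linarith) hvmin.le
  set a : ℝ := t_s + t1 with hadef
  set b : ℝ := t_e - t3 with hbdef
  clear_value t1 t3 a b
  rcases le_or_gt a b with hab | hab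
  · -- main case
    have hamem : a ∈ Icc t_s t_e := ⟨by linarith, by linarith⟩
    have hbmem : b ∈ Icc t_s t_e := ⟨by linarith, by linarith⟩
    have hsmem : t_s ∈ Icc t_s t_e := left_mem_Icc.mpr hts.le
    have hemem : t_e ∈ Icc t_s t_e := right_mem_Icc.mpr hts.le
    -- lower bound 1 : v t ≥ v_s + u_min (t - t_s)
    have hL1 : ∀ t ∈ Icc t_s t_e, v_s + u_min * (t - t_s) ≤ v t := by
      have hm : MonotoneOn (fun t => v t - u_min * t) (Icc t_s t_e) := by
        apply mono_aux
        · intro t ht; exact (hv t ht).sub (by fun_prop)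
        · intro t ht
          have hd : HasDerivAt (fun t => v t - u_min * t) (deriv v t - u_min) t :=
            ((hv t ht).hasDerivAt).sub (by simpa using (hasDerivAt_id t).const_mul u_min)
          rw [hd.deriv]; linarith [(hv' t ht).1]
      intro t ht
      have := hm hsmem ht ht.1
      simp only [hvse] at this
      linarith
    -- lower bound 2 : v t ≥ v_e + u_max (t - t_e)
    have hL2 : ∀ t ∈ Icc t_s t_e, v_e + u_max * (t - t_e) ≤ v t := by
      have hm : MonotoneOn (fun t => u_max * t - v t) (Icc t_s t_e) := by
        apply mono_aux
        · intro t ht; exact (by fun_prop : DifferentiableAt ℝ (fun t => u_max * t) t).sub (hv t ht)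
        · intro t ht
          have hd : HasDerivAt (fun t => u_max * t - v t) (u_max - deriv v t) t :=
            (by simpa using (hasDerivAt_id t).const_mul u_max : HasDerivAt (fun t => u_max * t) u_max t).sub ((hv t ht).hasDerivAt)
          rw [hd.deriv]; linarith [(hv' t ht).2]
      intro t ht
      have := hm ht hemem ht.2
      simp only [hvee] at this
      linarith
    -- position gain over [t_s, a]
    have hG1 : v_s * t1 + u_min * t1 ^ 2 / 2 ≤ p a - p t_s := by
      have hm : MonotoneOn (fun t => p t - (v_s * t + u_min * (t - t_s) ^ 2 / 2))
          (Icc t_s t_e) := by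
        apply mono_aux
        · intro t ht; exact (hp t ht).differentiableAt.sub (by fun_prop)
        · intro t ht
          have hB : HasDerivAt (fun t : ℝ => v_s * t + u_min * (t - t_s) ^ 2 / 2)
              (v_s + u_min * (t - t_s)) t := by
            have hsq : HasDerivAt (fun t : ℝ => (t - t_s) ^ 2) (2 * (t - t_s)) t := by
              simpa using ((hasDerivAt_id t).sub_const t_s).fun_pow 2
            have := ((hasDerivAt_id t).const_mul v_s).fun_add ((hsq.const_mul u_min).div_const 2)
            convert this using 1
            · rfl
            · rfl
            · rfl
            · ring
          have hd : HasDerivAt (fun t => p t - (v_s * t + u_min * (t - t_s) ^ 2 / 2))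
              (v t - (v_s + u_min * (t - t_s))) t := (hp t ht).sub hB
          rw [hd.deriv]
          linarith [hL1 t ht]
      have := hm hsmem hamem hamem.1
      simp only [hadef] at this ⊢
      have h2 : t_s + t1 - t_s = t1 := by ring
      rw [h2] at this
      nlinarith [this]
    -- position gain over [a, b]
    have hG2 : v_min * (b - a) ≤ p b - p a := by
      have hm : MonotoneOn (fun t => p t - v_min * t) (Icc t_s t_e) := by
        apply mono_aux
        · intro t ht; exact (hp t ht).differentiableAt.sub (by fun_prop)
        · intro t ht
          have hd : HasDerivAt (fun t => p t - v_min * t) (v t - v_min) t :=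
            (hp t ht).sub (by simpa using (hasDerivAt_id t).const_mul v_min)
          rw [hd.deriv]
          linarith [hvlb t ht]
      have := hm hamem hbmem hab
      simp only at this
      linarith
    -- position gain over [b, t_e]
    have hG3 : v_e * t3 - u_max * t3 ^ 2 / 2 ≤ p t_e - p b := by
      have hm : MonotoneOn (fun t => p t - (v_e * t + u_max * (t - t_e) ^ 2 / 2))
          (Icc t_s t_e) := by
        apply mono_aux
        · intro t ht; exact (hp t ht).differentiableAt.sub (by fun_prop)
        · intro t ht
          have hB : HasDerivAt (fun t : ℝ => v_e * t + u_max * (t - t_e) ^ 2 / 2)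
              (v_e + u_max * (t - t_e)) t := by
            have hsq : HasDerivAt (fun t : ℝ => (t - t_e) ^ 2) (2 * (t - t_e)) t := by
              simpa using ((hasDerivAt_id t).sub_const t_e).fun_pow 2
            have := ((hasDerivAt_id t).const_mul v_e).fun_add ((hsq.const_mul u_max).div_const 2)
            convert this using 1
            · rfl
            · rfl
            · rfl
            · ring
          have hd : HasDerivAt (fun t => p t - (v_e * t + u_max * (t - t_e) ^ 2 / 2))
              (v t - (v_e + u_max * (t - t_e))) t := (hp t ht).sub hB
          rw [hd.deriv]
          linarith [hL2 t ht]
      have := hm hbmem hemem hbmem.2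
      simp only [hbdef] at this ⊢
      have h2 : t_e - t3 - t_e = -t3 := by ring
      rw [h2] at this
      nlinarith [this]
    -- arithmetic identities
    have hmu1 : u_min * t1 = v_min - v_s := by
      rw [ht1def, mul_comm, div_mul_cancel₀ _ (ne_of_lt hmin)]
    have hmu3 : u_max * t3 = v_e - v_min := by
      rw [ht3def, mul_comm, div_mul_cancel₀ _ (ne_of_gt hmax)]
    have e1 : v_s * t1 + u_min * t1 ^ 2 / 2 = (v_min ^ 2 - v_s ^ 2) / (2 * u_min) := by
      have hr : (v_min ^ 2 - v_s ^ 2) / (2 * u_min) = t1 * (v_min + v_s) / 2 := by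
        rw [ht1def]; field_simp; ring
      rw [hr]; linear_combination (t1 / 2) * hmu1
    have e3 : v_e * t3 - u_max * t3 ^ 2 / 2 = (v_e ^ 2 - v_min ^ 2) / (2 * u_max) := by
      have hr : (v_e ^ 2 - v_min ^ 2) / (2 * u_max) = t3 * (v_e + v_min) / 2 := by
        rw [ht3def]; field_simp; ring
      rw [hr]; linear_combination (-(t3 / 2)) * hmu3
    have hsum : v_min * (b - a) ≤ q₂ - q₁ := by
      rw [hq1, hq2]
      have : (v_e ^ 2 - v_min ^ 2) / (2 * u_max) = -((v_min ^ 2 - v_e ^ 2) / (2 * u_max)) := by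
        ring
      rw [e1] at hG1; rw [e3, this] at hG3
      rw [hps] at hG1; rw [hpe] at hG3
      linarith
    have hba : b - a ≤ (q₂ - q₁) / v_min := by
      rw [le_div_iff₀ hvmin]
      linarith [hsum]
    have hT : t_e - t_s = t1 + (b - a) + t3 := by
      rw [hadef, hbdef]; ring
    rw [hD]
    linarith
  · -- degenerate case: t_e - t_s < t1 + t3 ≤ D
    rw [hD]
    have : t_e - t_s < t1 + t3 := by
      have := hab
      rw [hbdef, hadef] at this
      linarith
    linarith
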